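/- Let (D_cf, C_cf) be any cut-free cycle-normal CLKID^ω_a proof of the sequent Add2(x,y,z) ⊢ Add1(x,y,z). Then every sequent Γ ⊢ Δ occurring in D_cf satisfies: (1) Γ consists only of atomic formulas built with = or Add2; (2) Δ consists only of atomic formulas built with Add1; (3) every term occurring in Γ or Δ has the form s^n 0 or s^n x for a variable x; (4) the only rules occurring in (D_cf, C_cf) are (Weak), (Subst), (= L_a), (Case Add2), (Add1 R₁) and (Add1 R₂). -/

import Mathlib

namespace CLKID

/-- Terms of the language: variables, the constant `0`, and the unary function `s`. -/
inductive Tm : Type where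
  | var : ℕ → Tm
  | zero : Tm
  | s : Tm → Tm
deriving DecidableEq

/-- `sIter n t` is the term `s^n t`. -/
def sIter : ℕ → Tm → Tm
  | 0, t => t
  | n + 1, t => Tm.s (sIter n t)

/-- Substitution on terms. -/
def Tm.subst (θ : ℕ → Tm) : Tm → Tm
  | .var x => θ x
  | .zero => .zero
  | .s t => .s (t.subst θ)

/-- Free variables of a term. -/
def Tm.fv : Tm → Set ℕ
  | .var x => {x}
  | .zero => ∅
  | .s t => t.fv

/-- Subterms of a term. -/
def Tm.sub : Tm → Set Tm
  | .var x => {Tm.var x}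
  | .zero => {Tm.zero}
  | .s t => insert (Tm.s t) t.sub

/-- The variable of a term (`none` if the term is of the form `s^n 0`). -/
def Tm.varOf : Tm → Option ℕ
  | .var x => some x
  | .zero => none
  | .s t => t.varOf

/-- Formulas: equations, the two inductive-predicate atoms `Add1`/`Add2`,
    and the usual first-order connectives and quantifiers. -/
inductive Fm : Type where
  | eq : Tm → Tm → Fm
  | add1 : Tm → Tm → Tm → Fm
  | add2 : Tm → Tm → Tm → Fm
  | not : Fm → Fm
  | and : Fm → Fm → Fm
  | or : Fm → Fm → Fm
  | imp : Fm → Fm → Fm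
  | all : ℕ → Fm → Fm
  | ex : ℕ → Fm → Fm
deriving DecidableEq

/-- Substitution on formulas. -/
def Fm.subst (θ : ℕ → Tm) : Fm → Fm
  | .eq t u => .eq (t.subst θ) (u.subst θ)
  | .add1 a b c => .add1 (a.subst θ) (b.subst θ) (c.subst θ)
  | .add2 a b c => .add2 (a.subst θ) (b.subst θ) (c.subst θ)
  | .not φ => .not (φ.subst θ)
  | .and φ ψ => .and (φ.subst θ) (ψ.subst θ)
  | .or φ ψ => .or (φ.subst θ) (ψ.subst θ)
  | .imp φ ψ => .imp (φ.subst θ) (ψ.subst θ)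
  | .all x φ => .all x (φ.subst (Function.update θ x (Tm.var x)))
  | .ex x φ => .ex x (φ.subst (Function.update θ x (Tm.var x)))

/-- Free variables of a formula. -/
def Fm.fv : Fm → Set ℕ
  | .eq t u => t.fv ∪ u.fv
  | .add1 a b c => a.fv ∪ b.fv ∪ c.fv
  | .add2 a b c => a.fv ∪ b.fv ∪ c.fv
  | .not φ => φ.fv
  | .and φ ψ => φ.fv ∪ ψ.fv
  | .or φ ψ => φ.fv ∪ ψ.fv
  | .imp φ ψ => φ.fv ∪ ψ.fv
  | .all x φ => φ.fv \ {x}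
  | .ex x φ => φ.fv \ {x}

/-- Terms occurring in a formula. -/
def Fm.tms : Fm → Set Tm
  | .eq t u => t.sub ∪ u.sub
  | .add1 a b c => a.sub ∪ b.sub ∪ c.sub
  | .add2 a b c => a.sub ∪ b.sub ∪ c.sub
  | .not φ => φ.tms
  | .and φ ψ => φ.tms ∪ ψ.tms
  | .or φ ψ => φ.tms ∪ ψ.tms
  | .imp φ ψ => φ.tms ∪ ψ.tms
  | .all _ φ => φ.tms
  | .ex _ φ => φ.tms

/-- The substitution `[x := t]`. -/
def sub1 (x : ℕ) (t : Tm) : ℕ → Tm := fun y => if y = x then t else Tm.var y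

/-- The simultaneous substitution `[v1 := t, v2 := u]`. -/
def sub2 (v1 v2 : ℕ) (t u : Tm) : ℕ → Tm :=
  fun z => if z = v1 then t else if z = v2 then u else Tm.var z

/-- `≡_Γ`: the smallest congruence relation on terms containing all pairs `(t, u)`
    with the equation `t = u` in `Γ`. -/
inductive EqvTm (Γ : Set Fm) : Tm → Tm → Prop where
  | base {t u : Tm} : Fm.eq t u ∈ Γ → EqvTm Γ t u
  | refl (t : Tm) : EqvTm Γ t t
  | symm {t u : Tm} : EqvTm Γ t u → EqvTm Γ u t
  | trans {t u v : Tm} : EqvTm Γ t u → EqvTm Γ u v → EqvTm Γ t v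
  | sCongr {t u : Tm} : EqvTm Γ t u → EqvTm Γ (Tm.s t) (Tm.s u)

/-- `t ~_Γ u` : `s^n t ≡_Γ s^m u` for some naturals `n`, `m`. -/
def DepTm (Γ : Set Fm) (t u : Tm) : Prop := ∃ n m : ℕ, EqvTm Γ (sIter n t) (sIter m u)

/-- A sequent: a pair of finite sets of formulas. -/
structure Seq where
  ant : Finset Fm
  suc : Finset Fm

/-- The antecedent of a sequent, as a set of formulas. -/
def antSet (S : Seq) : Set Fm := ↑S.ant

/-- `[Γ]` from Lemma on chains: `{ s^n t1 = s^n t2 | t1 = t2 ∈ Γ or t2 = t1 ∈ Γ }`. -/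
def brkt (Γ : Set Fm) : Set Fm :=
  {φ | ∃ (n : ℕ) (t1 t2 : Tm), φ = Fm.eq (sIter n t1) (sIter n t2) ∧
        (Fm.eq t1 t2 ∈ Γ ∨ Fm.eq t2 t1 ∈ Γ)}

/-- `B1(Γ ⊢ Δ)` : second arguments of `Add1` atoms in the consequent. -/
def B1 (S : Seq) : Set Tm := {b | ∃ a c, Fm.add1 a b c ∈ S.suc}

/-- `C(Γ ⊢ Δ)` : third arguments of `Add2` atoms in the antecedent
    or `Add1` atoms in the consequent. -/
def Cset (S : Seq) : Set Tm :=
  {c | (∃ a b, Fm.add2 a b c ∈ S.ant) ∨ (∃ a b, Fm.add1 a b c ∈ S.suc)}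

/-- Index sequent. -/
def IndexSequent (S : Seq) : Prop :=
  (∀ t ∈ B1 S, ∀ u ∈ Cset S, ¬ DepTm (antSet S) t u) ∧
  (∀ b ∈ B1 S, ∀ b' ∈ B1 S, ∀ n m : ℕ, EqvTm (antSet S) (sIter n b) (sIter m b') → n = m)

/-! ## The cyclic proof systems `CLKID^ω` and `CLKID^ω_a` -/

/-- Rule labels; each label carries the instance data needed to describe the
    rule application (principal formulas, substitutions, case variables, ...).
    `bud` labels bud leaves of cyclic derivation trees. -/
inductive Rule : Type where
  | ax
  | weak
  | cut (φ : Fm)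
  | subst (θ : ℕ → Tm)
  | negL (φ : Fm)
  | negR (φ : Fm)
  | andL (φ ψ : Fm)
  | andR (φ ψ : Fm)
  | orL (φ ψ : Fm)
  | orR (φ ψ : Fm)
  | impL (φ ψ : Fm)
  | impR (φ ψ : Fm)
  | allL (x : ℕ) (t : Tm) (φ : Fm)
  | allR (x : ℕ) (φ : Fm)
  | exL (x : ℕ) (φ : Fm)
  | exR (x : ℕ) (t : Tm) (φ : Fm)
  | eqR (t : Tm)
  | eqL (v1 v2 : ℕ) (t u : Tm)
  | eqLa (v1 v2 : ℕ) (t u : Tm)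
  | add1R1
  | add1R2 (a b c : Tm)
  | add2R1
  | add2R2 (a b c : Tm)
  | caseAdd1 (a b c : Tm) (x y z : ℕ)
  | caseAdd2 (a b c : Tm) (x y z : ℕ)
  | bud

/-- `Inf r S L` : the sequent `S` follows from the list of premises `L`
    by the rule (instance) `r`. -/
inductive Inf : Rule → Seq → List Seq → Prop where
  | ax {Γ Δ : Finset Fm} :
      (Γ ∩ Δ).Nonempty → Inf .ax ⟨Γ, Δ⟩ []
  | weak {Γ Δ Γ' Δ' : Finset Fm} :
      Γ' ⊆ Γ → Δ' ⊆ Δ → Inf .weak ⟨Γ, Δ⟩ [⟨Γ', Δ'⟩]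
  | cut {Γ Δ : Finset Fm} {φ : Fm} :
      Inf (.cut φ) ⟨Γ, Δ⟩ [⟨Γ, insert φ Δ⟩, ⟨insert φ Γ, Δ⟩]
  | subst {Γ Δ : Finset Fm} {θ : ℕ → Tm} :
      Inf (.subst θ) ⟨Γ.image (Fm.subst θ), Δ.image (Fm.subst θ)⟩ [⟨Γ, Δ⟩]
  | negL {Γ Δ : Finset Fm} {φ : Fm} :
      Inf (.negL φ) ⟨insert (.not φ) Γ, Δ⟩ [⟨Γ, insert φ Δ⟩]
  | negR {Γ Δ : Finset Fm} {φ : Fm} :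
      Inf (.negR φ) ⟨Γ, insert (.not φ) Δ⟩ [⟨insert φ Γ, Δ⟩]
  | andL {Γ Δ : Finset Fm} {φ ψ : Fm} :
      Inf (.andL φ ψ) ⟨insert (.and φ ψ) Γ, Δ⟩ [⟨insert φ (insert ψ Γ), Δ⟩]
  | andR {Γ Δ : Finset Fm} {φ ψ : Fm} :
      Inf (.andR φ ψ) ⟨Γ, insert (.and φ ψ) Δ⟩ [⟨Γ, insert φ Δ⟩, ⟨Γ, insert ψ Δ⟩]
  | orL {Γ Δ : Finset Fm} {φ ψ : Fm} :
      Inf (.orL φ ψ) ⟨insert (.or φ ψ) Γ, Δ⟩ [⟨insert φ Γ, Δ⟩, ⟨insert ψ Γ, Δ⟩]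
  | orR {Γ Δ : Finset Fm} {φ ψ : Fm} :
      Inf (.orR φ ψ) ⟨Γ, insert (.or φ ψ) Δ⟩ [⟨Γ, insert φ (insert ψ Δ)⟩]
  | impL {Γ Δ : Finset Fm} {φ ψ : Fm} :
      Inf (.impL φ ψ) ⟨insert (.imp φ ψ) Γ, Δ⟩ [⟨Γ, insert φ Δ⟩, ⟨insert ψ Γ, Δ⟩]
  | impR {Γ Δ : Finset Fm} {φ ψ : Fm} :
      Inf (.impR φ ψ) ⟨Γ, insert (.imp φ ψ) Δ⟩ [⟨insert φ Γ, insert ψ Δ⟩]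
  | allL {Γ Δ : Finset Fm} {x : ℕ} {t : Tm} {φ : Fm} :
      Inf (.allL x t φ) ⟨insert (.all x φ) Γ, Δ⟩ [⟨insert (φ.subst (sub1 x t)) Γ, Δ⟩]
  | allR {Γ Δ : Finset Fm} {x : ℕ} {φ : Fm} :
      (∀ ψ ∈ Γ ∪ Δ, x ∉ Fm.fv ψ) →
      Inf (.allR x φ) ⟨Γ, insert (.all x φ) Δ⟩ [⟨Γ, insert φ Δ⟩]
  | exL {Γ Δ : Finset Fm} {x : ℕ} {φ : Fm} :
      (∀ ψ ∈ Γ ∪ Δ, x ∉ Fm.fv ψ) →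
      Inf (.exL x φ) ⟨insert (.ex x φ) Γ, Δ⟩ [⟨insert φ Γ, Δ⟩]
  | exR {Γ Δ : Finset Fm} {x : ℕ} {t : Tm} {φ : Fm} :
      Inf (.exR x t φ) ⟨Γ, insert (.ex x φ) Δ⟩ [⟨Γ, insert (φ.subst (sub1 x t)) Δ⟩]
  | eqR {Γ Δ : Finset Fm} {t : Tm} :
      Inf (.eqR t) ⟨Γ, insert (.eq t t) Δ⟩ []
  | eqL {Γ Δ : Finset Fm} {v1 v2 : ℕ} {t u : Tm} :
      Inf (.eqL v1 v2 t u)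
        ⟨insert (.eq t u) (Γ.image (Fm.subst (sub2 v1 v2 t u))),
          Δ.image (Fm.subst (sub2 v1 v2 t u))⟩
        [⟨Γ.image (Fm.subst (sub2 v1 v2 u t)), Δ.image (Fm.subst (sub2 v1 v2 u t))⟩]
  | eqLa {Γ Δ : Finset Fm} {v1 v2 : ℕ} {t u : Tm} :
      Inf (.eqLa v1 v2 t u)
        ⟨insert (.eq t u) (Γ.image (Fm.subst (sub2 v1 v2 t u))),
          Δ.image (Fm.subst (sub2 v1 v2 t u))⟩
        [⟨insert (.eq t u) (Γ.image (Fm.subst (sub2 v1 v2 u t))),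
          Δ.image (Fm.subst (sub2 v1 v2 u t))⟩]
  | add1R1 {Γ Δ : Finset Fm} {b : Tm} :
      Inf .add1R1 ⟨Γ, insert (.add1 .zero b b) Δ⟩ []
  | add1R2 {Γ Δ : Finset Fm} {a b c : Tm} :
      Inf (.add1R2 a b c) ⟨Γ, insert (.add1 (.s a) b (.s c)) Δ⟩ [⟨Γ, insert (.add1 a b c) Δ⟩]
  | add2R1 {Γ Δ : Finset Fm} {b : Tm} :
      Inf .add2R1 ⟨Γ, insert (.add2 .zero b b) Δ⟩ []
  | add2R2 {Γ Δ : Finset Fm} {a b c : Tm} :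
      Inf (.add2R2 a b c) ⟨Γ, insert (.add2 (.s a) b c) Δ⟩ [⟨Γ, insert (.add2 a (.s b) c) Δ⟩]
  | caseAdd1 {Γ Δ : Finset Fm} {a b c : Tm} {x y z : ℕ} :
      x ≠ y → x ≠ z → y ≠ z →
      (∀ ψ ∈ insert (Fm.add1 a b c) (Γ ∪ Δ), x ∉ Fm.fv ψ ∧ y ∉ Fm.fv ψ ∧ z ∉ Fm.fv ψ) →
      Inf (.caseAdd1 a b c x y z) ⟨insert (.add1 a b c) Γ, Δ⟩
        [⟨insert (.eq a .zero) (insert (.eq b (.var y)) (insert (.eq c (.var y)) Γ)), Δ⟩,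
         ⟨insert (.eq a (.s (.var x))) (insert (.eq b (.var y)) (insert (.eq c (.s (.var z)))
            (insert (.add1 (.var x) (.var y) (.var z)) Γ))), Δ⟩]
  | caseAdd2 {Γ Δ : Finset Fm} {a b c : Tm} {x y z : ℕ} :
      x ≠ y → x ≠ z → y ≠ z →
      (∀ ψ ∈ insert (Fm.add2 a b c) (Γ ∪ Δ), x ∉ Fm.fv ψ ∧ y ∉ Fm.fv ψ ∧ z ∉ Fm.fv ψ) →
      Inf (.caseAdd2 a b c x y z) ⟨insert (.add2 a b c) Γ, Δ⟩
        [⟨insert (.eq a .zero) (insert (.eq b (.var y)) (insert (.eq c (.var y)) Γ)), Δ⟩,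
         ⟨insert (.eq a (.s (.var x))) (insert (.eq b (.var y)) (insert (.eq c (.var z))
            (insert (.add2 (.var x) (.s (.var y)) (.var z)) Γ))), Δ⟩]

/-- A labeling of tree nodes (finite sequences of naturals) by sequents and rules;
    `none` means the node is not in the tree. -/
abbrev Lbl : Type := List ℕ → Option (Seq × Rule)

/-- The children of `σ` are labeled exactly by the premise list `prems`. -/
def childrenOK (f : Lbl) (σ : List ℕ) (prems : List Seq) : Prop :=
  (∀ i : Fin prems.length, ∃ r', f (σ ++ [(i : ℕ)]) = some (prems.get i, r')) ∧
  (∀ i : ℕ, prems.length ≤ i → f (σ ++ [i]) = none)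

/-- Derivation trees (possibly infinite): prefix-closed domain, each non-bud node
    is the conclusion of a rule whose premises label its children, buds are leaves. -/
structure DTree where
  label : Lbl
  root_def : label [] ≠ none
  prefix_closed : ∀ σ τ : List ℕ, label (σ ++ τ) ≠ none → label σ ≠ none
  wf : ∀ σ S r, label σ = some (S, r) →
    (r = Rule.bud ∧ ∀ i : ℕ, label (σ ++ [i]) = none) ∨
    (r ≠ Rule.bud ∧ ∃ prems, Inf r S prems ∧ childrenOK label σ prems)

/-- `σ` is a bud of the labeling `f`. -/
def budAt (f : Lbl) (σ : List ℕ) : Prop := ∃ S, f σ = some (S, Rule.bud)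

/-- `σ` is an inner node of `f` labeled with the sequent `S`. -/
def innerWith (f : Lbl) (σ : List ℕ) (S : Seq) : Prop :=
  ∃ r, f σ = some (S, r) ∧ r ≠ Rule.bud

/-- A pre-proof: a finite derivation tree together with a function assigning to
    each bud a companion, i.e. an inner node labeled with the same sequent. -/
structure PreProof where
  D : DTree
  fin : {σ : List ℕ | D.label σ ≠ none}.Finite
  C : List ℕ → List ℕ
  comp : ∀ σ S, D.label σ = some (S, Rule.bud) → innerWith D.label (C σ) S

/-- Cycle-normality: every companion is an ancestor of its bud. -/
def PreProof.CycleNormal (P : PreProof) : Prop :=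
  ∀ σ S, P.D.label σ = some (S, Rule.bud) → P.C σ <+: σ

/-- `T` is the tree-unfolding of the pre-proof `P`: it agrees with `P.D` on
    non-bud nodes, below a bud it continues as below the bud's companion, and it
    is empty on nodes not in `P.D` having no bud prefix. -/
def IsUnfolding (P : PreProof) (T : Lbl) : Prop :=
  (∀ σ, P.D.label σ ≠ none → ¬ budAt P.D.label σ → T σ = P.D.label σ) ∧
  (∀ σ₁ σ₂ : List ℕ, budAt P.D.label σ₁ → T (σ₁ ++ σ₂) = T (P.C σ₁ ++ σ₂)) ∧
  (∀ σ, P.D.label σ = none → (∀ σ₁, σ₁ <+: σ → ¬ budAt P.D.label σ₁) → T σ = none)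

/-- An infinite path in the labeling `f`. -/
def IsInfPath (f : Lbl) (p : ℕ → List ℕ) : Prop :=
  (∀ i, f (p i) ≠ none) ∧ (∀ i, ∃ n : ℕ, p (i + 1) = p i ++ [n])

/-- Atomic formulas with an inductive predicate. -/
def isIndAtom (φ : Fm) : Prop :=
  (∃ a b c, φ = Fm.add1 a b c) ∨ (∃ a b c, φ = Fm.add2 a b c)

/-- A progressing trace step: the traced formula is the principal formula of a
    case rule and its successor (in the corresponding case distinction, child `j`)
    is a case-descendant. -/
def progStep : Rule → ℕ → Fm → Fm → Prop := fun r j τ τ' =>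
  match r with
  | .caseAdd1 a b c x y z =>
      τ = Fm.add1 a b c ∧ j = 1 ∧ τ' = Fm.add1 (.var x) (.var y) (.var z)
  | .caseAdd2 a b c x y z =>
      τ = Fm.add2 a b c ∧ j = 1 ∧ τ' = Fm.add2 (.var x) (.s (.var y)) (.var z)
  | _ => False

/-- The trace connection relation between the traced formula at a conclusion of a
    rule `r` and the traced formula at its `j`-th premise. -/
def connStep : Rule → ℕ → Fm → Fm → Prop := fun r j τ τ' =>
  match r with
  | .subst θ => τ = Fm.subst θ τ'
  | .eqL v1 v2 t u =>
      ∃ F : Fm, τ = Fm.subst (sub2 v1 v2 t u) F ∧ τ' = Fm.subst (sub2 v1 v2 u t) F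
  | .eqLa v1 v2 t u =>
      ∃ F : Fm, τ = Fm.subst (sub2 v1 v2 t u) F ∧ τ' = Fm.subst (sub2 v1 v2 u t) F
  | .caseAdd1 a b c x y z => τ' = τ ∨ progStep (.caseAdd1 a b c x y z) j τ τ'
  | .caseAdd2 a b c x y z => τ' = τ ∨ progStep (.caseAdd2 a b c x y z) j τ τ'
  | _ => τ' = τ

/-- `τ` is a trace following the tail from `k` of the path `p` in `f`. -/
def IsTraceFrom (f : Lbl) (p : ℕ → List ℕ) (k : ℕ) (τ : ℕ → Fm) : Prop :=
  ∀ i, k ≤ i →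
    ∃ (S : Seq) (r : Rule) (j : ℕ), f (p i) = some (S, r) ∧ τ i ∈ S.ant ∧ isIndAtom (τ i) ∧
      p (i + 1) = p i ++ [j] ∧ connStep r j (τ i) (τ (i + 1))

/-- The trace `τ` progresses at position `i` of the path `p`. -/
def progAt (f : Lbl) (p : ℕ → List ℕ) (τ : ℕ → Fm) (i : ℕ) : Prop :=
  ∃ (S : Seq) (r : Rule) (j : ℕ), f (p i) = some (S, r) ∧ p (i + 1) = p i ++ [j] ∧
    progStep r j (τ i) (τ (i + 1))

/-- The global trace condition for a (possibly infinite) labeling `f`. -/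
def GTC (f : Lbl) : Prop :=
  ∀ p : ℕ → List ℕ, IsInfPath f p →
    ∃ (k : ℕ) (τ : ℕ → Fm), IsTraceFrom f p k τ ∧
      ∀ n : ℕ, ∃ i, n ≤ i ∧ k ≤ i ∧ progAt f p τ i

/-- A pre-proof is a proof when its tree-unfolding satisfies the
    global trace condition. -/
def PreProof.IsProof (P : PreProof) : Prop := ∃ T : Lbl, IsUnfolding P T ∧ GTC T

/-- Some rule satisfying `Q` occurs in the labeling `f`. -/
def usesRule (f : Lbl) (Q : Rule → Prop) : Prop := ∃ σ S r, f σ = some (S, r) ∧ Q r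

/-- No occurrence of (Cut). -/
def PreProof.CutFree (P : PreProof) : Prop :=
  ¬ usesRule P.D.label (fun r => ∃ φ, r = Rule.cut φ)

/-- No occurrence of (= L_a): the pre-proof is a `CLKID^ω` pre-proof. -/
def PreProof.NoEqLa (P : PreProof) : Prop :=
  ¬ usesRule P.D.label (fun r => ∃ v1 v2 t u, r = Rule.eqLa v1 v2 t u)

/-- No occurrence of (= L): the pre-proof is a `CLKID^ω_a` pre-proof. -/
def PreProof.NoEqL (P : PreProof) : Prop :=
  ¬ usesRule P.D.label (fun r => ∃ v1 v2 t u, r = Rule.eqL v1 v2 t u)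

/-- The conclusion of the pre-proof is the sequent `S`. -/
def PreProof.Concl (P : PreProof) (S : Seq) : Prop := ∃ r, P.D.label [] = some (S, r)

/-- Provability in `CLKID^ω`. -/
def ProvableW (S : Seq) : Prop :=
  ∃ P : PreProof, P.IsProof ∧ P.NoEqLa ∧ P.Concl S

/-- Provability in `CLKID^ω_a`. -/
def ProvableWa (S : Seq) : Prop :=
  ∃ P : PreProof, P.IsProof ∧ P.NoEqL ∧ P.Concl S

/-- Cut-free provability in `CLKID^ω`. -/
def CutFreeProvableW (S : Seq) : Prop :=
  ∃ P : PreProof, P.IsProof ∧ P.CutFree ∧ P.NoEqLa ∧ P.Concl S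

/-- The sequent `Add2(x, y, z) ⊢ Add1(x, y, z)`. -/
def goalSeq : Seq :=
  ⟨{Fm.add2 (Tm.var 0) (Tm.var 1) (Tm.var 2)}, {Fm.add1 (Tm.var 0) (Tm.var 1) (Tm.var 2)}⟩

/-- A cut-free cycle-normal `CLKID^ω_a` proof of `Add2(x,y,z) ⊢ Add1(x,y,z)`. -/
def IsCNProofOfGoal (P : PreProof) : Prop :=
  P.IsProof ∧ P.CutFree ∧ P.NoEqL ∧ P.CycleNormal ∧ P.Concl goalSeq

/-- The index of an `Add2` atom with second argument `b` in the sequent `S` is `⊥`. -/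
def IndexBot (S : Seq) (b : Tm) : Prop :=
  ∀ a' b' c', Fm.add1 a' b' c' ∈ S.suc → ¬ DepTm (antSet S) b b'

/-- `σ` is a switching point of `f`: the conclusion of a `(Case Add2)` rule whose
    principal formula has index `⊥`. -/
def SwitchingPoint (f : Lbl) (σ : List ℕ) : Prop :=
  ∃ S a b c x y z, f σ = some (S, Rule.caseAdd2 a b c x y z) ∧ IndexBot S b

/-- `σ` is the conclusion of a `(Case Add2)` rule in `f`. -/
def CaseAdd2At (f : Lbl) (σ : List ℕ) : Prop :=
  ∃ S a b c x y z, f σ = some (S, Rule.caseAdd2 a b c x y z)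

/-- The node `σ` of `f` is labeled with an index sequent. -/
def IndexSequentAt (f : Lbl) (σ : List ℕ) : Prop :=
  ∃ S r, f σ = some (S, r) ∧ IndexSequent S

/-- A finite index path `p 0, …, p N` in `f`:  its first sequent is an index
    sequent, and a step to the left premise (child `0`) of a `(Case Add2)` rule
    only happens at switching points. -/
def IsIndexPathUpTo (f : Lbl) (p : ℕ → List ℕ) (N : ℕ) : Prop :=
  (∀ i, i ≤ N → f (p i) ≠ none) ∧
  (∀ i, i < N → ∃ n : ℕ, p (i + 1) = p i ++ [n]) ∧
  IndexSequentAt f (p 0) ∧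
  (∀ i, i < N → CaseAdd2At f (p i) → p (i + 1) = p i ++ [0] → SwitchingPoint f (p i))

/-- An infinite index path in `f`. -/
def IsInfIndexPath (f : Lbl) (p : ℕ → List ℕ) : Prop :=
  IsInfPath f p ∧
  IndexSequentAt f (p 0) ∧
  (∀ i, CaseAdd2At f (p i) → p (i + 1) = p i ++ [0] → SwitchingPoint f (p i))

/-- The child index chosen by the rightmost path: the right assumption of
    `(Case Add2)`, the unique premise otherwise. -/
def rightIdx : Rule → ℕ := fun r =>
  match r with
  | .caseAdd2 _ _ _ _ _ _ => 1
  | _ => 0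

/-- One step of the rightmost path in `f`. -/
def RightStep (f : Lbl) (σ σ' : List ℕ) : Prop :=
  ∃ S r, f σ = some (S, r) ∧ σ' = σ ++ [rightIdx r] ∧ f σ' ≠ none

/-- `A(Γ ⊢ Δ)` of Lemma `abc_relations`. -/
def Aset (S : Seq) : Set Tm :=
  {a | (∃ b c, Fm.add2 a b c ∈ S.ant) ∨ (∃ b c, Fm.add1 a b c ∈ S.suc) ∨ a = Tm.zero}

/-- `BC(Γ ⊢ Δ)` of Lemma `abc_relations`. -/
def BCset (S : Seq) : Set Tm :=
  {t | (∃ a c, Fm.add2 a t c ∈ S.ant) ∨ (∃ a b, Fm.add2 a b t ∈ S.ant) ∨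
       (∃ a c, Fm.add1 a t c ∈ S.suc) ∨ (∃ a b, Fm.add1 a b t ∈ S.suc)}

/-- The rules that can occur in a cut-free cycle-normal `CLKID^ω_a` proof of
    `Add2(x,y,z) ⊢ Add1(x,y,z)` (plus bud labels). -/
def allowedRule (r : Rule) : Prop :=
  r = Rule.bud ∨ r = Rule.weak ∨ (∃ θ, r = Rule.subst θ) ∨
  (∃ v1 v2 t u, r = Rule.eqLa v1 v2 t u) ∨
  (∃ a b c x y z, r = Rule.caseAdd2 a b c x y z) ∨
  r = Rule.add1R1 ∨ (∃ a b c, r = Rule.add1R2 a b c)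

lemma tm_form (t : Tm) :
    (∃ n, t = sIter n Tm.zero) ∨ (∃ n x, t = sIter n (Tm.var x)) := by
  induction t with
  | var x => exact Or.inr ⟨0, x, rfl⟩
  | zero => exact Or.inl ⟨0, rfl⟩
  | s t ih =>
    rcases ih with ⟨n, h⟩ | ⟨n, x, h⟩
    · exact Or.inl ⟨n + 1, by rw [h]; rfl⟩
    · exact Or.inr ⟨n + 1, x, by rw [h]; rfl⟩

/-- `φ` is an equation or an `Add2` atom. -/
def isEA (φ : Fm) : Prop := (∃ t u, φ = Fm.eq t u) ∨ (∃ a b c, φ = Fm.add2 a b c)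

/-- `φ` is an `Add1` atom. -/
def isA1 (φ : Fm) : Prop := ∃ a b c, φ = Fm.add1 a b c

lemma isEA_subst (θ : ℕ → Tm) (φ : Fm) : isEA (Fm.subst θ φ) ↔ isEA φ := by
  cases φ <;> simp [Fm.subst, isEA]

lemma isA1_subst (θ : ℕ → Tm) (φ : Fm) : isA1 (Fm.subst θ φ) ↔ isA1 φ := by
  cases φ <;> simp [Fm.subst, isA1]

/-- The shape invariant on sequents. -/
def Shape (S : Seq) : Prop := (∀ φ ∈ S.ant, isEA φ) ∧ (∀ φ ∈ S.suc, isA1 φ)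

lemma inf_step {r : Rule} {S : Seq} {prems : List Seq} (h : Inf r S prems)
    (hS : Shape S) (hc : ∀ φ, r ≠ Rule.cut φ)
    (he : ∀ v1 v2 t u, r ≠ Rule.eqL v1 v2 t u) :
    allowedRule r ∧ ∀ S' ∈ prems, Shape S' := by
  cases h with
  | ax hne =>
    exfalso
    obtain ⟨φ, hφ⟩ := hne
    rw [Finset.mem_inter] at hφ
    obtain ⟨a, b, c, rfl⟩ := hS.2 φ hφ.2
    rcases hS.1 _ hφ.1 with ⟨_, _, h⟩ | ⟨_, _, _, h⟩ <;> simp at h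
  | weak hΓ hΔ =>
    refine ⟨Or.inr (Or.inl rfl), ?_⟩
    intro S' hS'; simp only [List.mem_singleton] at hS'; subst hS'
    exact ⟨fun φ hφ => hS.1 φ (hΓ hφ), fun φ hφ => hS.2 φ (hΔ hφ)⟩
  | cut => exact absurd rfl (hc _)
  | @subst Γ Δ θ =>
    refine ⟨Or.inr (Or.inr (Or.inl ⟨θ, rfl⟩)), ?_⟩
    intro S' hS'; simp only [List.mem_singleton] at hS'; subst hS'
    constructor
    · intro φ hφ
      exact (isEA_subst θ φ).mp (hS.1 _ (Finset.mem_image_of_mem _ hφ))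
    · intro φ hφ
      exact (isA1_subst θ φ).mp (hS.2 _ (Finset.mem_image_of_mem _ hφ))
  | negL =>
    exfalso
    rcases hS.1 _ (Finset.mem_insert_self _ _) with ⟨_, _, h⟩ | ⟨_, _, _, h⟩ <;> simp at h
  | negR =>
    exfalso; obtain ⟨_, _, _, h⟩ := hS.2 _ (Finset.mem_insert_self _ _); simp at h
  | andL =>
    exfalso
    rcases hS.1 _ (Finset.mem_insert_self _ _) with ⟨_, _, h⟩ | ⟨_, _, _, h⟩ <;> simp at h
  | andR =>
    exfalso; obtain ⟨_, _, _, h⟩ := hS.2 _ (Finset.mem_insert_self _ _); simp at h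
  | orL =>
    exfalso
    rcases hS.1 _ (Finset.mem_insert_self _ _) with ⟨_, _, h⟩ | ⟨_, _, _, h⟩ <;> simp at h
  | orR =>
    exfalso; obtain ⟨_, _, _, h⟩ := hS.2 _ (Finset.mem_insert_self _ _); simp at h
  | impL =>
    exfalso
    rcases hS.1 _ (Finset.mem_insert_self _ _) with ⟨_, _, h⟩ | ⟨_, _, _, h⟩ <;> simp at h
  | impR =>
    exfalso; obtain ⟨_, _, _, h⟩ := hS.2 _ (Finset.mem_insert_self _ _); simp at h
  | allL =>
    exfalso
    rcases hS.1 _ (Finset.mem_insert_self _ _) with ⟨_, _, h⟩ | ⟨_, _, _, h⟩ <;> simp at h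
  | allR =>
    exfalso; obtain ⟨_, _, _, h⟩ := hS.2 _ (Finset.mem_insert_self _ _); simp at h
  | exL =>
    exfalso
    rcases hS.1 _ (Finset.mem_insert_self _ _) with ⟨_, _, h⟩ | ⟨_, _, _, h⟩ <;> simp at h
  | exR =>
    exfalso; obtain ⟨_, _, _, h⟩ := hS.2 _ (Finset.mem_insert_self _ _); simp at h
  | eqR =>
    exfalso; obtain ⟨_, _, _, h⟩ := hS.2 _ (Finset.mem_insert_self _ _); simp at h
  | eqL => exact absurd rfl (he _ _ _ _)
  | @eqLa Γ Δ v1 v2 t u =>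
    refine ⟨Or.inr (Or.inr (Or.inr (Or.inl ⟨v1, v2, t, u, rfl⟩))), ?_⟩
    intro S' hS'; simp only [List.mem_singleton] at hS'; subst hS'
    constructor
    · intro φ hφ
      rcases Finset.mem_insert.mp hφ with rfl | hφ
      · exact Or.inl ⟨t, u, rfl⟩
      · obtain ⟨ψ, hψ, rfl⟩ := Finset.mem_image.mp hφ
        have hm : Fm.subst (sub2 v1 v2 t u) ψ ∈
            insert (Fm.eq t u) (Γ.image (Fm.subst (sub2 v1 v2 t u))) :=
          Finset.mem_insert_of_mem (Finset.mem_image_of_mem _ hψ)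
        exact (isEA_subst _ _).mpr ((isEA_subst _ _).mp (hS.1 _ hm))
    · intro φ hφ
      obtain ⟨ψ, hψ, rfl⟩ := Finset.mem_image.mp hφ
      exact (isA1_subst _ _).mpr ((isA1_subst _ _).mp
        (hS.2 _ (Finset.mem_image_of_mem _ hψ)))
  | add1R1 =>
    exact ⟨Or.inr (Or.inr (Or.inr (Or.inr (Or.inr (Or.inl rfl))))),
      fun S' hS' => absurd hS' List.not_mem_nil⟩
  | @add1R2 Γ Δ a b c =>
    refine ⟨Or.inr (Or.inr (Or.inr (Or.inr (Or.inr (Or.inr ⟨a, b, c, rfl⟩))))), ?_⟩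
    intro S' hS'; simp only [List.mem_singleton] at hS'; subst hS'
    refine ⟨hS.1, ?_⟩
    intro φ hφ
    rcases Finset.mem_insert.mp hφ with rfl | hφ
    · exact ⟨a, b, c, rfl⟩
    · exact hS.2 _ (Finset.mem_insert_of_mem hφ)
  | add2R1 =>
    exfalso; obtain ⟨_, _, _, h⟩ := hS.2 _ (Finset.mem_insert_self _ _); simp at h
  | add2R2 =>
    exfalso; obtain ⟨_, _, _, h⟩ := hS.2 _ (Finset.mem_insert_self _ _); simp at h
  | caseAdd1 =>
    exfalso
    rcases hS.1 _ (Finset.mem_insert_self _ _) with ⟨_, _, h⟩ | ⟨_, _, _, h⟩ <;> simp at h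
  | @caseAdd2 Γ Δ a b c x y z hxy hxz hyz hfv =>
    refine ⟨Or.inr (Or.inr (Or.inr (Or.inr (Or.inl ⟨a, b, c, x, y, z, rfl⟩)))), ?_⟩
    have hΓ : ∀ φ ∈ Γ, isEA φ := fun φ hφ => hS.1 φ (Finset.mem_insert_of_mem hφ)
    intro S' hS'
    simp only [List.mem_cons, List.mem_singleton, List.not_mem_nil, or_false] at hS'
    rcases hS' with rfl | rfl
    · refine ⟨?_, hS.2⟩
      intro φ hφ
      simp only [Finset.mem_insert] at hφ
      rcases hφ with rfl | rfl | rfl | hφ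
      · exact Or.inl ⟨_, _, rfl⟩
      · exact Or.inl ⟨_, _, rfl⟩
      · exact Or.inl ⟨_, _, rfl⟩
      · exact hΓ _ hφ
    · refine ⟨?_, hS.2⟩
      intro φ hφ
      simp only [Finset.mem_insert] at hφ
      rcases hφ with rfl | rfl | rfl | rfl | hφ
      · exact Or.inl ⟨_, _, rfl⟩
      · exact Or.inl ⟨_, _, rfl⟩
      · exact Or.inl ⟨_, _, rfl⟩
      · exact Or.inr ⟨_, _, _, rfl⟩
      · exact hΓ _ hφ

/-- In a cut-free cycle-normal `CLKID^ω_a` proof of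
    `Add2(x,y,z) ⊢ Add1(x,y,z)`: antecedents consist of `=`/`Add2` atoms,
    consequents of `Add1` atoms, all terms are of the form `s^n 0` or `s^n x`,
    and only the rules (Weak), (Subst), (= L_a), (Case Add2), (Add1 R₁),
    (Add1 R₂) occur. -/
theorem cutfree_proof_shape (P : PreProof) (hP : IsCNProofOfGoal P) :
    ∀ σ S r, P.D.label σ = some (S, r) →
      (∀ φ ∈ S.ant, (∃ t u, φ = Fm.eq t u) ∨ (∃ a b c, φ = Fm.add2 a b c)) ∧
      (∀ φ ∈ S.suc, ∃ a b c, φ = Fm.add1 a b c) ∧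
      (∀ φ ∈ S.ant ∪ S.suc, ∀ t ∈ Fm.tms φ,
        (∃ n, t = sIter n Tm.zero) ∨ (∃ n x, t = sIter n (Tm.var x))) ∧
      allowedRule r := by
  obtain ⟨_, hcf, hnl, _, hconcl⟩ := hP
  have hShape : ∀ σ S r, P.D.label σ = some (S, r) → Shape S := by
    intro σ
    induction σ using List.reverseRecOn with
    | nil =>
      intro S r h
      obtain ⟨r0, h0⟩ := hconcl
      rw [h0] at h
      simp only [Option.some.injEq, Prod.mk.injEq] at h
      obtain ⟨rfl, -⟩ := h
      constructor
      · intro φ hφ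
        simp only [goalSeq, Finset.mem_singleton] at hφ
        subst hφ
        exact Or.inr ⟨_, _, _, rfl⟩
      · intro φ hφ
        simp only [goalSeq, Finset.mem_singleton] at hφ
        subst hφ
        exact ⟨_, _, _, rfl⟩
    | append_singleton σ' i ih =>
      intro S r h
      have hne : P.D.label σ' ≠ none :=
        P.D.prefix_closed σ' [i] (by rw [h]; exact Option.some_ne_none _)
      obtain ⟨⟨S', r'⟩, h'⟩ := Option.ne_none_iff_exists'.mp hne
      have hS' := ih S' r' h'
      rcases P.D.wf σ' S' r' h' with ⟨_, hnone⟩ | ⟨-, prems, hinf, hch⟩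
      · exact absurd (hnone i) (by rw [h]; exact Option.some_ne_none _)
      · have hstep := inf_step hinf hS'
          (fun φ hr => absurd ⟨σ', S', r', h', φ, hr⟩ hcf)
          (fun v1 v2 t u hr => absurd ⟨σ', S', r', h', v1, v2, t, u, hr⟩ hnl)
        by_cases hi : i < prems.length
        · obtain ⟨r'', hc2⟩ := hch.1 ⟨i, hi⟩
          rw [h] at hc2
          simp only [Option.some.injEq, Prod.mk.injEq] at hc2
          obtain ⟨rfl, -⟩ := hc2
          exact hstep.2 _ (List.get_mem _ _)
        · exact absurd (hch.2 i (le_of_not_gt hi)) (by rw [h]; exact Option.some_ne_none _)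
  intro σ S r h
  have hS := hShape σ S r h
  refine ⟨fun φ hφ => hS.1 φ hφ, fun φ hφ => hS.2 φ hφ,
    fun φ _ t _ => tm_form t, ?_⟩
  rcases P.D.wf σ S r h with ⟨hb, -⟩ | ⟨-, prems, hinf, -⟩
  · exact Or.inl hb
  · exact (inf_step hinf hS
      (fun φ hr => absurd ⟨σ, S, r, h, φ, hr⟩ hcf)
      (fun v1 v2 t u hr => absurd ⟨σ, S, r, h, v1, v2, t, u, hr⟩ hnl)).1


end CLKID
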